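/- Let φ : A → M be a map from a commutative additive monoid A to an abelian group M. Define, for a₁,…,aₙ ∈ A, the finite difference D_{(a₁,…,aₙ)}φ(x) = Σ_{k=0}^n Σ_{1≤i₁<⋯<i_k≤n} (−1)^{n−k} φ(x + a_{i₁} + ⋯ + a_{i_k}). If φ is polynomial (i.e. φ = 0 or some iterated difference of order n vanishes identically), then there exists a unique polynomial map φ̃ : K₀(A) → M extending φ along the group-completion map κ : A → K₀(A), i.e. φ̃ ∘ κ = φ. Moreover, if φ is additive then φ̃ is additive. -/

import Mathlib

/-- The finite difference `(D_a φ)(x) = φ(x + a) − φ(x)`. -/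
def finDiff {A M : Type} [AddCommMonoid A] [AddCommGroup M] (a : A) (φ : A → M) : A → M :=
  fun x => φ (x + a) - φ x

/-- The iterated finite difference `D_{(a₁,…,aₙ)}φ`, i.e.
`x ↦ Σ_{k} Σ_{i₁<⋯<i_k} (−1)^{n−k} φ(x + a_{i₁} + ⋯ + a_{i_k})`. -/
def iterDiff {A M : Type} [AddCommMonoid A] [AddCommGroup M] (l : List A) (φ : A → M) : A → M :=
  l.foldr finDiff φ

/-- A map `φ : A → M` into an abelian group is polynomial if `φ = 0` or some
positive-order iterated finite difference of `φ` vanishes identically. -/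
def IsPolynomialMap {A M : Type} [AddCommMonoid A] [AddCommGroup M] (φ : A → M) : Prop :=
  (φ = fun _ => 0) ∨
    ∃ n : ℕ, 0 < n ∧ ∀ l : List A, l.length = n → ∀ x, iterDiff l φ x = 0

namespace PolyExt

variable {A M : Type} [AddCommMonoid A] [AddCommGroup M]

lemma iterDiff_cons (a : A) (l : List A) (φ : A → M) :
    iterDiff (a :: l) φ = finDiff a (iterDiff l φ) := rfl

lemma iterDiff_append (l₁ l₂ : List A) (φ : A → M) :
    iterDiff (l₁ ++ l₂) φ = iterDiff l₁ (iterDiff l₂ φ) := List.foldr_append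

lemma iterDiff_zero_fun (l : List A) : iterDiff l (fun _ : A => (0 : M)) = fun _ => 0 := by
  induction l with
  | nil => rfl
  | cons a l ih => rw [iterDiff_cons, ih]; funext x; simp [finDiff]

lemma iterDiff_sub (l : List A) (f g : A → M) :
    iterDiff l (fun x => f x - g x) = fun x => iterDiff l f x - iterDiff l g x := by
  induction l with
  | nil => rfl
  | cons a l ih =>
    rw [iterDiff_cons, ih]
    funext x
    simp only [finDiff, iterDiff_cons]
    abel

lemma vanish_of_le {f : A → M} {n : ℕ}
    (h : ∀ l : List A, l.length = n → ∀ x, iterDiff l f x = 0)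
    {l : List A} (hl : n ≤ l.length) : ∀ x, iterDiff l f x = 0 := by
  have h2 : iterDiff (l.drop (l.length - n)) f = fun _ => 0 := by
    funext x
    exact h _ (by rw [List.length_drop]; omega) x
  intro x
  conv_lhs => rw [← List.take_append_drop (l.length - n) l]
  rw [iterDiff_append, h2, iterDiff_zero_fun]

lemma isPoly_norm {f : A → M} (h : IsPolynomialMap f) :
    ∃ n, 0 < n ∧ ∀ l : List A, l.length = n → ∀ x, iterDiff l f x = 0 := by
  rcases h with h | h
  · subst h
    exact ⟨1, one_pos, fun l _ x => by rw [iterDiff_zero_fun]⟩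
  · exact h

lemma poly_inversion {G : Type} [AddCommGroup G] (f : G → M) (n : ℕ)
    (h : ∀ l : List G, l.length = n → ∀ x, iterDiff l f x = 0) (x t : G) :
    f (x - t) = ∑ k ∈ Finset.range n, (-1 : ℤ) ^ k • iterDiff (List.replicate k t) f x := by
  rcases n with _ | m
  · simpa [iterDiff] using h [] rfl (x - t)
  set Ak : ℕ → G → M := fun k => iterDiff (List.replicate k t) f with hA
  have hAsucc : ∀ k y, Ak (k + 1) y = Ak k (y + t) - Ak k y := fun k y => rfl
  have key : ∀ y, (∑ k ∈ Finset.range (m + 1), (-1 : ℤ) ^ k • Ak k (y + t)) = f y := by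
    intro y
    have h1 : ∀ k, Ak k (y + t) = Ak (k + 1) y + Ak k y := by
      intro k; rw [hAsucc]; abel
    have e1 : (∑ k ∈ Finset.range (m + 1), (-1 : ℤ) ^ k • Ak k (y + t))
        = (∑ k ∈ Finset.range (m + 1), (-1 : ℤ) ^ k • Ak (k + 1) y)
          + ∑ k ∈ Finset.range (m + 1), (-1 : ℤ) ^ k • Ak k y := by
      rw [← Finset.sum_add_distrib]
      exact Finset.sum_congr rfl fun k _ => by rw [h1, smul_add]
    have e2 : (∑ k ∈ Finset.range (m + 1), (-1 : ℤ) ^ k • Ak (k + 1) y)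
        = -∑ k ∈ Finset.range (m + 1), (-1 : ℤ) ^ (k + 1) • Ak (k + 1) y := by
      rw [← Finset.sum_neg_distrib]
      exact Finset.sum_congr rfl fun k _ => by
        rw [pow_succ, mul_neg_one, neg_smul, neg_neg]
    have e3 : (∑ k ∈ Finset.range (m + 1), (-1 : ℤ) ^ (k + 1) • Ak (k + 1) y)
        = (∑ k ∈ Finset.range (m + 2), (-1 : ℤ) ^ k • Ak k y) - (-1 : ℤ) ^ 0 • Ak 0 y := by
      rw [Finset.sum_range_succ' (fun k => (-1 : ℤ) ^ k • Ak k y) (m + 1)]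
      abel
    have hAtop : Ak (m + 1) y = 0 := h _ List.length_replicate y
    rw [e1, e2, e3, Finset.sum_range_succ, hAtop, smul_zero]
    have : Ak 0 y = f y := rfl
    rw [this]
    simp only [pow_zero, one_smul]
    abel
  have := key (x - t)
  rw [sub_add_cancel] at this
  rw [← this]
lemma ext_zero {G : Type} [AddCommGroup G] (κ : A → G)
    (hadd : ∀ a b, κ (a + b) = κ a + κ b)
    (hgen : ∀ z : G, ∃ a b, z = κ a - κ b)
    (f : G → M) (n : ℕ)
    (h : ∀ l : List G, l.length = n → ∀ x, iterDiff l f x = 0)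
    (h0 : ∀ a, f (κ a) = 0) : ∀ z, f z = 0 := by
  intro z
  obtain ⟨a, b, rfl⟩ := hgen z
  have hk : ∀ k (a : A), iterDiff (List.replicate k (κ b)) f (κ a) = 0 := by
    intro k
    induction k with
    | zero => exact h0
    | succ k ih =>
      intro a
      have he : iterDiff (List.replicate (k + 1) (κ b)) f (κ a)
          = iterDiff (List.replicate k (κ b)) f (κ a + κ b)
            - iterDiff (List.replicate k (κ b)) f (κ a) := rfl
      rw [he, ← hadd, ih, ih, sub_zero]
  rw [poly_inversion f n h (κ a) (κ b)]
  exact Finset.sum_eq_zero fun k _ => by rw [hk k a, smul_zero]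

/-! ### Monoid algebra acting by translations -/

noncomputable def eps (a : A) : AddMonoidAlgebra ℤ A := AddMonoidAlgebra.single a 1

def act (r : AddMonoidAlgebra ℤ A) (φ : A → M) : A → M :=
  fun x => r.coeff.sum fun a c => c • φ (x + a)

lemma act_single (a : A) (c : ℤ) (φ : A → M) (x : A) :
    act (AddMonoidAlgebra.single a c) φ x = c • φ (x + a) :=
  Finsupp.sum_single_index (zero_smul _ _)

lemma act_add (r s : AddMonoidAlgebra ℤ A) (φ : A → M) (x : A) :
    act (r + s) φ x = act r φ x + act s φ x :=
  Finsupp.sum_add_index' (fun _ => zero_smul _ _) (fun _ c d => add_smul c d _)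

noncomputable def actHom (φ : A → M) (x : A) : AddMonoidAlgebra ℤ A →+ M where
  toFun r := act r φ x
  map_zero' := Finsupp.sum_zero_index
  map_add' r s := act_add r s φ x

lemma act_sub (r s : AddMonoidAlgebra ℤ A) (φ : A → M) (x : A) :
    act (r - s) φ x = act r φ x - act s φ x := map_sub (actHom φ x) r s

lemma act_fun_zero (r : AddMonoidAlgebra ℤ A) :
    act r (fun _ : A => (0 : M)) = fun _ => 0 := by
  funext x; simp [act]

lemma act_one (φ : A → M) (x : A) : act 1 φ x = φ x := by
  rw [AddMonoidAlgebra.one_def, act_single, one_smul, add_zero]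

lemma act_fsum {α β : Type*} [Zero β] (f : α →₀ β) (g : α → β → AddMonoidAlgebra ℤ A)
    (φ : A → M) (x : A) :
    act (f.sum g) φ x = f.sum fun a b => act (g a b) φ x :=
  map_finsuppSum (actHom φ x) f g

lemma act_mul (r s : AddMonoidAlgebra ℤ A) (φ : A → M) (x : A) :
    act (r * s) φ x = act r (act s φ) x := by
  rw [AddMonoidAlgebra.mul_def, act_fsum]
  have e1 : ∀ (a₁ : A) (b₁ : ℤ),
      act (s.coeff.sum fun a₂ b₂ => AddMonoidAlgebra.single (a₁ + a₂) (b₁ * b₂)) φ x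
        = b₁ • act s φ (x + a₁) := by
    intro a₁ b₁
    rw [act_fsum]
    have h2 : act s φ (x + a₁) = s.coeff.sum fun a₂ b₂ => b₂ • φ (x + a₁ + a₂) := rfl
    rw [h2, Finsupp.smul_sum]
    refine Finsupp.sum_congr fun a₂ _ => ?_
    refine (act_single _ _ _ _).trans ?_
    rw [mul_smul, add_assoc]
  exact Finsupp.sum_congr fun a₁ _ => e1 a₁ _

lemma eps_mul (a b : A) : (eps a * eps b : AddMonoidAlgebra ℤ A) = eps (a + b) := by
  rw [eps, eps, eps, AddMonoidAlgebra.single_mul_single, one_mul]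

lemma finDiff_act (a : A) (φ : A → M) : finDiff a φ = act (eps a - 1) φ := by
  funext x
  rw [act_sub, act_one, eps, act_single, one_smul, finDiff]

lemma iterDiff_act (l : List A) (φ : A → M) :
    iterDiff l φ = act ((l.map fun a => eps a - 1).prod) φ := by
  induction l with
  | nil => funext x; rw [List.map_nil, List.prod_nil, act_one]; rfl
  | cons a l ih =>
    funext x
    rw [iterDiff_cons, ih, finDiff_act, List.map_cons, List.prod_cons, act_mul]

open Pointwise in
/-- The ideal of operators annihilating `φ`. -/
def Jid (φ : A → M) : Ideal (AddMonoidAlgebra ℤ A) where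
  carrier := {r | ∀ x, act r φ x = 0}
  add_mem' := fun hr hs x => by rw [act_add, hr x, hs x, add_zero]
  zero_mem' := fun x => Finsupp.sum_zero_index
  smul_mem' := fun c r hr => by
    intro x
    rw [smul_eq_mul, act_mul]
    rw [show act r φ = fun _ => (0 : M) from funext hr, act_fun_zero]

lemma mem_Jid {φ : A → M} {r : AddMonoidAlgebra ℤ A} :
    r ∈ Jid φ ↔ ∀ x, act r φ x = 0 := Iff.rfl

noncomputable def Iid (A : Type) [AddCommMonoid A] : Ideal (AddMonoidAlgebra ℤ A) :=
  Ideal.span (Set.range fun a : A => eps a - 1)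

open Pointwise in
lemma Ipow_le (φ : A → M) (N : ℕ)
    (hN : ∀ l : List A, l.length = N → ∀ x, iterDiff l φ x = 0) :
    Iid A ^ N ≤ Jid φ := by
  have hspan : Iid A = Submodule.span (AddMonoidAlgebra ℤ A)
      (Set.range fun a : A => eps a - 1) := rfl
  rw [hspan, Submodule.span_pow]
  rw [Submodule.span_le]
  intro r hr
  obtain ⟨F, hF⟩ := Set.mem_pow.mp hr
  have hg : ∀ i : Fin N, ∃ a : A, eps a - 1 = (F i : AddMonoidAlgebra ℤ A) := fun i => (F i).2
  choose g hgs using hg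
  intro x
  have hprod : ((List.ofFn g).map fun a => eps a - 1).prod = r := by
    rw [List.map_ofFn]
    rw [← hF]
    congr 1
    exact congrArg List.ofFn (funext fun i => hgs i)
  have := hN (List.ofFn g) List.length_ofFn x
  rwa [iterDiff_act, hprod] at this

lemma list_prod_mem_pow {R : Type} [CommRing R] (P : Ideal R) (l : List R)
    (h : ∀ x ∈ l, x ∈ P) : l.prod ∈ P ^ l.length := by
  induction l with
  | nil => simp [Ideal.one_eq_top]
  | cons a l ih =>
    rw [List.prod_cons, List.length_cons, pow_succ']
    exact Ideal.mul_mem_mul (h a List.mem_cons_self) (ih fun x hx => h x (List.mem_cons_of_mem _ hx))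

noncomputable def actQ (φ : A → M) (q : AddMonoidAlgebra ℤ A ⧸ Jid φ) : M :=
  Quotient.liftOn' q (fun r => act r φ 0) (by
    intro r s h
    have hrs : r - s ∈ Jid φ := (Submodule.quotientRel_def _).mp h
    have h0 := hrs 0
    rw [act_sub] at h0
    exact sub_eq_zero.mp h0)

lemma actQ_mk (φ : A → M) (r : AddMonoidAlgebra ℤ A) :
    actQ φ (Ideal.Quotient.mk (Jid φ) r) = act r φ 0 := rfl

lemma actQ_sub (φ : A → M) (p q : AddMonoidAlgebra ℤ A ⧸ Jid φ) :
    actQ φ (p - q) = actQ φ p - actQ φ q := by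
  obtain ⟨r, rfl⟩ := Ideal.Quotient.mk_surjective p
  obtain ⟨s, rfl⟩ := Ideal.Quotient.mk_surjective q
  rw [← map_sub, actQ_mk, actQ_mk, actQ_mk, act_sub]

lemma actQ_zero (φ : A → M) : actQ φ 0 = 0 := by
  rw [show (0 : AddMonoidAlgebra ℤ A ⧸ Jid φ) = Ideal.Quotient.mk (Jid φ) 0 from (map_zero _).symm,
    actQ_mk]
  exact Finsupp.sum_zero_index

/-- `eps a` as a unit in the quotient ring. -/
noncomputable def uu (φ : A → M) (N : ℕ)
    (hN : ∀ l : List A, l.length = N → ∀ x, iterDiff l φ x = 0) (a : A) :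
    (AddMonoidAlgebra ℤ A ⧸ Jid φ)ˣ where
  val := Ideal.Quotient.mk (Jid φ) (eps a)
  inv := Ideal.Quotient.mk (Jid φ) (∑ k ∈ Finset.range N, (-(eps a - 1)) ^ k)
  val_inv := by
    rw [← map_mul, ← map_one (Ideal.Quotient.mk (Jid φ)), Ideal.Quotient.eq]
    have hid : eps a * (∑ k ∈ Finset.range N, (-(eps a - 1)) ^ k) - 1
        = -((-(eps a - 1)) ^ N) := by
      linear_combination -geom_sum_mul (-(eps a - 1)) N
    rw [hid]
    refine neg_mem ?_
    rw [show (-(eps a - 1)) ^ N = (-1) ^ N * (eps a - 1) ^ N by rw [← neg_one_mul, mul_pow]]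
    refine Ideal.mul_mem_left _ _ ?_
    intro x
    have hp : ((List.replicate N a).map fun c => eps c - 1).prod = (eps a - 1) ^ N := by
      rw [List.map_replicate, List.prod_replicate]
    have := hN (List.replicate N a) List.length_replicate x
    rwa [iterDiff_act, hp] at this
  inv_val := by
    rw [mul_comm]
    rw [← map_mul, ← map_one (Ideal.Quotient.mk (Jid φ)), Ideal.Quotient.eq]
    have hid : eps a * (∑ k ∈ Finset.range N, (-(eps a - 1)) ^ k) - 1
        = -((-(eps a - 1)) ^ N) := by
      linear_combination -geom_sum_mul (-(eps a - 1)) N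
    rw [hid]
    refine neg_mem ?_
    rw [show (-(eps a - 1)) ^ N = (-1) ^ N * (eps a - 1) ^ N by rw [← neg_one_mul, mul_pow]]
    refine Ideal.mul_mem_left _ _ ?_
    intro x
    have hp : ((List.replicate N a).map fun c => eps c - 1).prod = (eps a - 1) ^ N := by
      rw [List.map_replicate, List.prod_replicate]
    have := hN (List.replicate N a) List.length_replicate x
    rwa [iterDiff_act, hp] at this

lemma uu_val (φ : A → M) (N : ℕ) (hN : ∀ l : List A, l.length = N → ∀ x, iterDiff l φ x = 0)
    (a : A) : (uu φ N hN a).val = Ideal.Quotient.mk (Jid φ) (eps a) := rfl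

lemma uu_mul (φ : A → M) (N : ℕ) (hN : ∀ l : List A, l.length = N → ∀ x, iterDiff l φ x = 0)
    (a b : A) : uu φ N hN (a + b) = uu φ N hN a * uu φ N hN b := by
  ext
  rw [Units.val_mul, uu_val, uu_val, uu_val, ← map_mul, eps_mul]

lemma uu_zero (φ : A → M) (N : ℕ) (hN : ∀ l : List A, l.length = N → ∀ x, iterDiff l φ x = 0) :
    uu φ N hN 0 = 1 := by
  ext
  rw [uu_val, Units.val_one, show (eps 0 : AddMonoidAlgebra ℤ A) = 1 from
    (AddMonoidAlgebra.one_def).symm, map_one]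

lemma eps_sub_one_mem (a : A) : (eps a - 1 : AddMonoidAlgebra ℤ A) ∈ Iid A :=
  Ideal.subset_span ⟨a, rfl⟩

end PolyExt

namespace PolyExt

lemma cg1 {G : Type} [CommGroup G] {x y a b : G} (h : x * b = a * y) :
    x * y⁻¹ = a * b⁻¹ := by
  have h5 : x / y = a / b := div_eq_div_iff_mul_eq_mul.mpr h
  rw [div_eq_mul_inv, div_eq_mul_inv] at h5
  exact h5

lemma cg2 {G : Type} [CommGroup G] (a b c d : G) :
    a * b * (c * d)⁻¹ = a * c⁻¹ * (b * d⁻¹) := by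
  rw [mul_inv, mul_mul_mul_comm]

end PolyExt

open PolyExt in
set_option maxHeartbeats 1000000 in
theorem polynomial_map_extends_to_group_completion
    (A : Type) [AddCommMonoid A] (M : Type) [AddCommGroup M]
    (K : Type) [AddCommGroup K] (κ : A → K)
    (hadd : ∀ a b : A, κ (a + b) = κ a + κ b)
    (hgen : ∀ z : K, ∃ a b : A, z = κ a - κ b)
    (hker : ∀ a b : A, κ a = κ b ↔ ∃ c : A, a + c = b + c)
    (φ : A → M) (hφ : IsPolynomialMap φ) :
    (∃! φt : K → M, IsPolynomialMap φt ∧ ∀ a : A, φt (κ a) = φ a) ∧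
    ((∀ a b : A, φ (a + b) = φ a + φ b) →
      ∀ φt : K → M, IsPolynomialMap φt → (∀ a : A, φt (κ a) = φ a) →
        ∀ u v : K, φt (u + v) = φt u + φt v) := by
  classical
  obtain ⟨N, hNpos, hN⟩ := isPoly_norm hφ
  choose f g hfg using hgen
  let U : A → (AddMonoidAlgebra ℤ A ⧸ Jid φ)ˣ := uu φ N hN
  have hUmul : ∀ a b : A, U (a + b) = U a * U b := uu_mul φ N hN
  have hUzero : U 0 = 1 := uu_zero φ N hN
  have hUval : ∀ a : A, (U a).val = Ideal.Quotient.mk (Jid φ) (eps a) := uu_val φ N hN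
  let ρ : K → (AddMonoidAlgebra ℤ A ⧸ Jid φ)ˣ := fun z => U (f z) * (U (g z))⁻¹
  have hκ0 : κ 0 = 0 := by
    have h00 := hadd 0 0
    rw [add_zero] at h00
    exact (left_eq_add.mp h00)
  -- well-definedness of ρ
  have wd : ∀ (a b : A) (z : K), z = κ a - κ b → ρ z = U a * (U b)⁻¹ := by
    intro a b z hz
    have h2 : κ (f z) - κ (g z) = κ a - κ b := by rw [← hfg z, hz]
    have h1 : κ (f z + b) = κ (a + g z) := by
      rw [hadd, hadd]
      exact sub_eq_sub_iff_add_eq_add.mp h2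
    obtain ⟨c, hc⟩ := (hker _ _).mp h1
    have h3 : U (f z + b) * U c = U (a + g z) * U c := by
      rw [← hUmul, ← hUmul, hc]
    have h4 : U (f z) * U b = U a * U (g z) := by
      rw [← hUmul, ← hUmul]
      exact mul_right_cancel h3
    exact cg1 (G := (AddMonoidAlgebra ℤ A ⧸ Jid φ)ˣ) h4
  have hρadd : ∀ z w : K, ρ (z + w) = ρ z * ρ w := by
    intro z w
    have hzw : z + w = κ (f z + f w) - κ (g z + g w) := by
      rw [hadd, hadd]
      conv_lhs => rw [hfg z, hfg w]
      abel
    rw [wd _ _ _ hzw, hUmul, hUmul]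
    exact cg2 (G := (AddMonoidAlgebra ℤ A ⧸ Jid φ)ˣ) (U (f z)) (U (f w)) ((U (g z))) ((U (g w)))
  have hρκ : ∀ a : A, ρ (κ a) = U a := by
    intro a
    rw [wd a 0 (κ a) (by rw [hκ0, sub_zero]), hUzero, inv_one, mul_one]
  -- the extension
  set φt : K → M := fun z => actQ φ ((ρ z).val) with hφt
  have hext : ∀ a : A, φt (κ a) = φ a := by
    intro a
    show actQ φ ((ρ (κ a)).val) = φ a
    rw [hρκ, hUval, actQ_mk]
    show act (AddMonoidAlgebra.single a 1) φ 0 = φ a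
    rw [act_single, one_smul, zero_add]
  -- polynomiality
  have key : ∀ (l : List K) (q : AddMonoidAlgebra ℤ A ⧸ Jid φ) (z : K),
      iterDiff l (fun z => actQ φ (q * (ρ z).val)) z
        = actQ φ ((q * ((l.map fun w => (ρ w).val - 1).prod)) * (ρ z).val) := by
    intro l
    induction l with
    | nil =>
      intro q z
      rw [List.map_nil, List.prod_nil, mul_one]
      rfl
    | cons w l ih =>
      intro q z
      have e : iterDiff (w :: l) (fun z => actQ φ (q * (ρ z).val)) z
          = iterDiff l (fun z => actQ φ (q * (ρ z).val)) (z + w)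
            - iterDiff l (fun z => actQ φ (q * (ρ z).val)) z := rfl
      rw [e, ih, ih, ← actQ_sub]
      congr 1
      rw [hρadd z w, Units.val_mul, List.map_cons, List.prod_cons]
      ring
  have hpoly : ∀ l : List K, l.length = N → ∀ z, iterDiff l φt z = 0 := by
    intro l hl z
    have hid : φt = fun z => actQ φ ((1 : AddMonoidAlgebra ℤ A ⧸ Jid φ) * (ρ z).val) := by
      funext z
      rw [one_mul]
    rw [hid, key]
    have hmem : ∀ x ∈ l.map fun w => ((ρ w).val - 1),
        x ∈ Ideal.map (Ideal.Quotient.mk (Jid φ)) (Iid A) := by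
      intro x hx
      obtain ⟨w, hw, rfl⟩ := List.mem_map.mp hx
      have hiv : ((U (g w))⁻¹ : (AddMonoidAlgebra ℤ A ⧸ Jid φ)ˣ).val * (U (g w)).val = 1 := by
        rw [← Units.val_mul, inv_mul_cancel, Units.val_one]
      have hval : ((ρ w).val) - 1
          = ((U (g w))⁻¹ : (AddMonoidAlgebra ℤ A ⧸ Jid φ)ˣ).val
            * (Ideal.Quotient.mk (Jid φ) (eps (f w) - eps (g w))) := by
        show ((U (f w) * (U (g w))⁻¹ : (AddMonoidAlgebra ℤ A ⧸ Jid φ)ˣ).val)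
            - 1 = _
        rw [Units.val_mul, map_sub, ← hUval (f w), ← hUval (g w), mul_sub, hiv]
        ring
      rw [hval]
      have hIm : eps (f w) - eps (g w) ∈ Iid A := by
        have h9 : eps (f w) - eps (g w) = (eps (f w) - 1) - (eps (g w) - 1) := by ring
        rw [h9]
        exact sub_mem (eps_sub_one_mem (f w)) (eps_sub_one_mem (g w))
      exact Ideal.mul_mem_left _ _ (Ideal.mem_map_of_mem _ hIm)
    have hm := list_prod_mem_pow _ _ hmem
    rw [List.length_map, hl] at hm
    have hbot : (Ideal.map (Ideal.Quotient.mk (Jid φ)) (Iid A)) ^ N ≤ ⊥ := by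
      rw [← Ideal.map_pow]
      refine le_trans (Ideal.map_mono (Ipow_le φ N hN)) ?_
      rw [Ideal.map_le_iff_le_comap]
      intro r hr
      simp only [Ideal.mem_comap, Ideal.mem_bot]
      exact Ideal.Quotient.eq_zero_iff_mem.mpr hr
    have hprod : ((l.map fun w => ((ρ w).val - 1)).prod) = 0 := (Submodule.mem_bot _).mp (hbot hm)
    rw [hprod, mul_zero, zero_mul, actQ_zero]
  have hPolyφt : IsPolynomialMap φt := Or.inr ⟨N, hNpos, hpoly⟩
  -- uniqueness
  have huniq : ∀ ψ : K → M, IsPolynomialMap ψ → (∀ a, ψ (κ a) = φ a) → ψ = φt := by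
    intro ψ hψp hψe
    obtain ⟨n₁, hn₁, h₁⟩ := isPoly_norm hψp
    have hd : ∀ l : List K, l.length = max n₁ N → ∀ x,
        iterDiff l (fun z => ψ z - φt z) x = 0 := by
      intro l hl x
      rw [iterDiff_sub]
      show iterDiff l ψ x - iterDiff l φt x = 0
      rw [vanish_of_le h₁ (by omega : n₁ ≤ l.length) x,
        vanish_of_le hpoly (by omega : N ≤ l.length) x, sub_zero]
    have hz := ext_zero κ hadd (fun z => ⟨f z, g z, hfg z⟩) (fun z => ψ z - φt z)
      (max n₁ N) hd (fun a => by show ψ (κ a) - φt (κ a) = 0; rw [hψe, hext, sub_self])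
    funext z
    exact sub_eq_zero.mp (hz z)
  refine ⟨⟨φt, ⟨hPolyφt, hext⟩, fun ψ hψ => huniq ψ hψ.1 hψ.2⟩, ?_⟩
  -- additivity
  intro haddφ φt' hp' he' u v
  have hφ0 : φ 0 = 0 := by
    have h00 := haddφ 0 0
    rw [add_zero] at h00
    exact (left_eq_add.mp h00)
  set ℓ : K → M := fun z => φ (f z) - φ (g z) with hℓ
  have ℓwd : ∀ (a b : A) (z : K), z = κ a - κ b → ℓ z = φ a - φ b := by
    intro a b z hz
    have h2 : κ (f z) - κ (g z) = κ a - κ b := by rw [← hfg z, hz]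
    have h1 : κ (f z + b) = κ (a + g z) := by
      rw [hadd, hadd]
      exact sub_eq_sub_iff_add_eq_add.mp h2
    obtain ⟨c, hc⟩ := (hker _ _).mp h1
    have h3 := congrArg φ hc
    rw [haddφ, haddφ, haddφ, haddφ] at h3
    have h4 : φ (f z) + φ b = φ a + φ (g z) := add_right_cancel h3
    show φ (f z) - φ (g z) = φ a - φ b
    exact sub_eq_sub_iff_add_eq_add.mpr h4
  have ℓext : ∀ a : A, ℓ (κ a) = φ a := fun a => by
    rw [ℓwd a 0 (κ a) (by rw [hκ0, sub_zero]), hφ0, sub_zero]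
  have ℓadd : ∀ z w : K, ℓ (z + w) = ℓ z + ℓ w := by
    intro z w
    have hzw : z + w = κ (f z + f w) - κ (g z + g w) := by
      rw [hadd, hadd]
      conv_lhs => rw [hfg z, hfg w]
      abel
    rw [ℓwd _ _ _ hzw, haddφ, haddφ]
    show _ = (φ (f z) - φ (g z)) + (φ (f w) - φ (g w))
    abel
  have ℓpoly : IsPolynomialMap ℓ := by
    refine Or.inr ⟨2, two_pos, ?_⟩
    intro l hl x
    rcases l with _ | ⟨a, _ | ⟨b, _ | ⟨c, t⟩⟩⟩ <;> simp only [List.length] at hl <;> try omega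
    show (ℓ (x + a + b) - ℓ (x + a)) - (ℓ (x + b) - ℓ x) = 0
    rw [ℓadd (x + a) b, ℓadd x a, ℓadd x b]
    abel
  rw [(huniq φt' hp' he').trans (huniq ℓ ℓpoly ℓext).symm]
  exact ℓadd u v
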